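/- Shadow count: Let 1 ≤ d ≤ q and ν = x_0^{b_0}···x_ℓ^{b_ℓ} be a monomial of degree d with b_ℓ > 0. For all sufficiently large e, the number of projectively reduced monomials of degree e divisible by ν equals (q-b_0)···(q-b_{ℓ-1})·(1 + (q-b_ℓ)·p_{m-ℓ-1}). -/

import Mathlib

open MvPolynomial Finset

/-- Reduce an exponent modulo `q-1`: unchanged if `≤ q-1`, otherwise the
representative in `{1,...,q-1}` congruent to it modulo `q-1`. -/
def redExp (q a : ℕ) : ℕ := if a ≤ q - 1 then a else (a - 1) % (q - 1) + 1

/-- Projective reduction of a monomial (given by its exponent vector): all exponents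
below the top variable of the support are reduced modulo `q-1`, and the difference is
transferred to the exponent of the top variable. -/
noncomputable def projRed (q : ℕ) {m : ℕ} (μ : Fin (m + 1) →₀ ℕ) : Fin (m + 1) →₀ ℕ :=
  if h : μ.support.Nonempty then
    letI ℓ := μ.support.max' h
    Finsupp.equivFunOnFinite.symm fun i =>
      if i < ℓ then redExp q (μ i)
      else if i = ℓ then μ ℓ + ∑ j ∈ Finset.univ.filter (· < ℓ), (μ j - redExp q (μ j))
      else 0
  else 0

/-- Projective reduction of a polynomial: the linear extension of projective
reduction of monomials. -/
noncomputable def polyRed (q : ℕ) {m : ℕ} {k : Type} [CommRing k]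
    (f : MvPolynomial (Fin (m + 1)) k) : MvPolynomial (Fin (m + 1)) k :=
  f.support.sum fun μ => monomial (projRed q μ) (coeff μ f)

/-- The ideal generated by the Fermat polynomials `X i ^ q * X j - X i * X j ^ q`. -/
noncomputable def fermatIdeal (q m : ℕ) (k : Type) [CommRing k] : Ideal (MvPolynomial (Fin (m + 1)) k) :=
  Ideal.span {f | ∃ i j : Fin (m + 1), i < j ∧ f = X i ^ q * X j - X i * X j ^ q}

/-- The leading exponent (exponent vector of the leading monomial) of a multivariate
polynomial with respect to a monomial order. -/
noncomputable def lmExp {σ : Type} (mo : MonomialOrder σ) {R : Type} [CommSemiring R]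
    (f : MvPolynomial σ R) : σ →₀ ℕ :=
  mo.toSyn.symm (f.support.sup fun μ => mo.toSyn μ)

lemma redExp_eq_self {q a : ℕ} (h : a ≤ q - 1) : redExp q a = a := if_pos h

lemma le_of_redExp_eq {q a : ℕ} (hq : 2 ≤ q) (h : redExp q a = a) : a ≤ q - 1 := by
  by_contra hc
  rw [redExp, if_neg hc] at h
  have h1 : 0 < q - 1 := by omega
  have := Nat.mod_lt (a - 1) h1
  omega

lemma projRed_apply {q m : ℕ} (μ : Fin (m + 1) →₀ ℕ) (h : μ.support.Nonempty) (i : Fin (m + 1)) :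
    projRed q μ i = (if i < μ.support.max' h then redExp q (μ i)
      else if i = μ.support.max' h then
        μ (μ.support.max' h) +
          ∑ j ∈ Finset.univ.filter (· < μ.support.max' h), (μ j - redExp q (μ j))
      else 0) := by
  rw [projRed, dif_pos h]
  rfl

lemma projRed_fixed_iff {q m : ℕ} (hq : 2 ≤ q) (μ : Fin (m + 1) →₀ ℕ) (h : μ.support.Nonempty) :
    projRed q μ = μ ↔ ∀ i, i < μ.support.max' h → μ i ≤ q - 1 := by
  constructor
  · intro hfix i hi
    have hi' := DFunLike.congr_fun hfix i
    rw [projRed_apply μ h i, if_pos hi] at hi'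
    exact le_of_redExp_eq hq hi'
  · intro hb
    ext i
    rw [projRed_apply μ h i]
    rcases lt_trichotomy i (μ.support.max' h) with hlt | heq | hgt
    · rw [if_pos hlt, redExp_eq_self (hb i hlt)]
    · rw [if_neg (by simp [heq]), if_pos heq, heq]
      have : ∀ j ∈ Finset.univ.filter (· < μ.support.max' h), μ j - redExp q (μ j) = 0 := by
        intro j hj
        rw [redExp_eq_self (hb j (Finset.mem_filter.mp hj).2)]
        omega
      rw [Finset.sum_eq_zero this, add_zero]
    · rw [if_neg (by exact not_lt.mpr hgt.le), if_neg (by exact hgt.ne')]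
      symm
      rw [← Finsupp.notMem_support_iff]
      intro hc
      exact absurd (Finset.le_max' _ i hc) (not_le.mpr hgt)

/-- Shadow count: for a monomial `ν = x_0^{b_0} ⋯ x_ℓ^{b_ℓ}` of degree `d` with `b_ℓ > 0`
and `1 ≤ d ≤ q`, for all sufficiently large `e` the number of projectively reduced monomials
of degree `e` divisible by `ν` equals
`(q-b_0) ⋯ (q-b_{ℓ-1}) * (1 + (q-b_ℓ) * p_{m-ℓ-1})`. -/
theorem card_shadow (q m d : ℕ) (hq : IsPrimePow q) (hd1 : 1 ≤ d) (hdq : d ≤ q)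
    (ν : Fin (m + 1) →₀ ℕ) (ℓ : Fin (m + 1))
    (hνℓ : ν ℓ ≠ 0) (hsupp : ∀ i, ν i ≠ 0 → i ≤ ℓ) (hdeg : (∑ i, ν i) = d) :
    ∃ e₀ : ℕ, ∀ e ≥ e₀,
      Nat.card {μ : Fin (m + 1) →₀ ℕ // (∑ i, μ i) = e ∧ projRed q μ = μ ∧ ν ≤ μ}
        = (∏ i ∈ Finset.univ.filter (· < ℓ), (q - ν i)) *
            (1 + (q - ν ℓ) * ∑ i ∈ Finset.range (m - (ℓ : ℕ)), q ^ i) := by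
  classical
  have hq2 : 2 ≤ q := hq.two_le
  refine ⟨(m + 1) * q + q, fun e he => ?_⟩
  -- basic facts about ν
  have hν_le : ∀ i, ν i ≤ d := fun i =>
    hdeg ▸ Finset.single_le_sum (f := fun i => ν i) (fun _ _ => Nat.zero_le _) (Finset.mem_univ i)
  have hν0 : ∀ i, ℓ < i → ν i = 0 := fun i hi => by
    by_contra hc; exact absurd (hsupp i hc) (not_le.mpr hi)
  -- the boxes
  set B : Fin (m + 1) → Finset (Fin (m + 1) → ℕ) :=
    fun t => Fintype.piFinset fun i => if i < t then Finset.Icc (ν i) (q - 1) else {0} with hB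
  set S : Finset (Σ _ : Fin (m + 1), Fin (m + 1) → ℕ) :=
    (Finset.Icc ℓ (Fin.last m)).sigma (fun t => B t) with hS
  have hBmem : ∀ (t : Fin (m + 1)) (g : Fin (m + 1) → ℕ), g ∈ B t ↔
      ∀ i, if i < t then ν i ≤ g i ∧ g i ≤ q - 1 else g i = 0 := by
    intro t g
    rw [hB, Fintype.mem_piFinset]
    refine forall_congr' fun i => ?_
    split <;> simp
  -- the map
  set F : (Σ _ : Fin (m + 1), Fin (m + 1) → ℕ) → (Fin (m + 1) →₀ ℕ) := fun p =>
    Finsupp.equivFunOnFinite.symm (fun i => if i = p.1 then e - ∑ j, p.2 j else p.2 i) with hF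
  have hFapp : ∀ p i, F p i = if i = p.1 then e - ∑ j, p.2 j else p.2 i := fun p i => rfl
  -- facts about elements of S
  have hgsum : ∀ p ∈ S, ∑ j, p.2 j ≤ (m + 1) * (q - 1) := by
    intro p hp
    have hmem := ((hBmem p.1 p.2).mp (Finset.mem_sigma.mp hp).2)
    calc ∑ j, p.2 j ≤ ∑ _j : Fin (m + 1), (q - 1) := by
          refine Finset.sum_le_sum fun j _ => ?_
          have := hmem j
          split at this
          · exact this.2
          · omega
      _ = (m + 1) * (q - 1) := by simp [mul_comm]
  have hq_le : ∀ p ∈ S, q ≤ e - ∑ j, p.2 j ∧ ∑ j, p.2 j ≤ e := by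
    intro p hp
    have h1 := hgsum p hp
    have h2 : (m + 1) * (q - 1) ≤ (m + 1) * q := Nat.mul_le_mul_left _ (by omega)
    omega
  have hℓt : ∀ p ∈ S, ℓ ≤ p.1 := fun p hp =>
    (Finset.mem_Icc.mp (Finset.mem_sigma.mp hp).1).1
  have hFtop : ∀ p ∈ S, F p p.1 ≠ 0 := by
    intro p hp
    rw [hFapp, if_pos rfl]
    have := (hq_le p hp).1
    omega
  have hFub : ∀ p ∈ S, ∀ i, p.1 < i → F p i = 0 := by
    intro p hp i hi
    rw [hFapp, if_neg hi.ne']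
    have := (hBmem p.1 p.2).mp (Finset.mem_sigma.mp hp).2 i
    rw [if_neg (not_lt.mpr hi.le)] at this
    exact this
  have hFlow : ∀ p ∈ S, ∀ i, i < p.1 → ν i ≤ F p i ∧ F p i ≤ q - 1 := by
    intro p hp i hi
    rw [hFapp, if_neg hi.ne]
    have := (hBmem p.1 p.2).mp (Finset.mem_sigma.mp hp).2 i
    rwa [if_pos hi] at this
  -- max' characterization
  have hmax' : ∀ (μ : Fin (m + 1) →₀ ℕ) (t : Fin (m + 1)) (hne : μ.support.Nonempty),
      μ t ≠ 0 → (∀ i, t < i → μ i = 0) → μ.support.max' hne = t := by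
    intro μ t hne h0 hub
    refine le_antisymm ?_ (Finset.le_max' _ _ (Finsupp.mem_support_iff.mpr h0))
    apply Finset.max'_le
    intro i hi
    by_contra hc
    exact (Finsupp.mem_support_iff.mp hi) (hub i (not_le.mp hc))
  have hFne : ∀ p ∈ S, (F p).support.Nonempty := fun p hp =>
    ⟨p.1, Finsupp.mem_support_iff.mpr (hFtop p hp)⟩
  have hFsum : ∀ p ∈ S, ∑ i, F p i = e := by
    intro p hp
    have h0 : p.2 p.1 = 0 := by
      have := (hBmem p.1 p.2).mp (Finset.mem_sigma.mp hp).2 p.1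
      rwa [if_neg (lt_irrefl _)] at this
    rw [← Finset.add_sum_erase _ _ (Finset.mem_univ p.1)]
    rw [hFapp, if_pos rfl]
    have he2 : ∑ i ∈ Finset.univ.erase p.1, F p i = ∑ j, p.2 j := by
      rw [← Finset.sum_erase Finset.univ h0]
      refine Finset.sum_congr rfl fun i hi => ?_
      rw [hFapp, if_neg (Finset.mem_erase.mp hi).1]
    rw [he2]
    have := (hq_le p hp).2
    omega
  -- F p satisfies the predicate
  have hP : ∀ p ∈ S, (∑ i, F p i) = e ∧ projRed q (F p) = F p ∧ ν ≤ F p := by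
    intro p hp
    refine ⟨hFsum p hp, ?_, ?_⟩
    · rw [projRed_fixed_iff hq2 (F p) (hFne p hp),
        hmax' (F p) p.1 (hFne p hp) (hFtop p hp) (hFub p hp)]
      exact fun i hi => (hFlow p hp i hi).2
    · rw [Finsupp.le_def]
      intro i
      rcases lt_trichotomy i p.1 with hlt | heq | hgt
      · exact (hFlow p hp i hlt).1
      · rw [heq, hFapp, if_pos rfl]
        have h1 := (hq_le p hp).1
        have h2 := hν_le p.1
        omega
      · rw [hFub p hp i hgt, hν0 i (lt_of_le_of_lt (hℓt p hp) hgt)]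
  -- the bijection
  set f : ↥S → {μ : Fin (m + 1) →₀ ℕ // (∑ i, μ i) = e ∧ projRed q μ = μ ∧ ν ≤ μ} :=
    fun p => ⟨F p.1, hP p.1 p.2⟩ with hf
  have hbij : Function.Bijective f := by
    constructor
    · rintro ⟨p, hp⟩ ⟨p', hp'⟩ hfeq
      have hFF : F p = F p' := congrArg Subtype.val hfeq
      have htt : p.1 = p'.1 := by
        rw [← hmax' (F p) p.1 (hFne _ hp) (hFtop _ hp) (hFub _ hp),
          ← hmax' (F p') p'.1 (hFne _ hp') (hFtop _ hp') (hFub _ hp')]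
        simp only [hFF]
      have hgg : p.2 = p'.2 := by
        funext i
        rcases eq_or_ne i p.1 with heq | hne2
        · have h1 := (hBmem p.1 p.2).mp (Finset.mem_sigma.mp hp).2 i
          have h2 := (hBmem p'.1 p'.2).mp (Finset.mem_sigma.mp hp').2 i
          rw [if_neg (by simp [heq])] at h1
          rw [if_neg (by simp [heq, htt])] at h2
          rw [h1, h2]
        · have h3 := DFunLike.congr_fun hFF i
          rwa [hFapp, hFapp, if_neg hne2, if_neg (by rw [← htt]; exact hne2)] at h3
      apply Subtype.ext
      exact Sigma.ext htt (heq_of_eq hgg)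
    · rintro ⟨μ, hμsum, hμfix, hμle⟩
      have hμℓ : μ ℓ ≠ 0 := by
        have := Finsupp.le_def.mp hμle ℓ
        omega
      have hne : μ.support.Nonempty := ⟨ℓ, Finsupp.mem_support_iff.mpr hμℓ⟩
      set t := μ.support.max' hne with ht
      have hℓt' : ℓ ≤ t := Finset.le_max' _ _ (Finsupp.mem_support_iff.mpr hμℓ)
      have hbd : ∀ i, i < t → μ i ≤ q - 1 := (projRed_fixed_iff hq2 μ hne).mp hμfix
      have hub : ∀ i, t < i → μ i = 0 := by
        intro i hi
        rw [← Finsupp.notMem_support_iff]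
        intro hc
        exact absurd (Finset.le_max' _ i hc) (not_le.mpr hi)
      set g : Fin (m + 1) → ℕ := fun i => if i = t then 0 else μ i with hg
      have hgB : g ∈ B t := by
        rw [hBmem]
        intro i
        split
        · next h =>
          rw [hg]
          simp only [if_neg h.ne]
          exact ⟨Finsupp.le_def.mp hμle i, hbd i h⟩
        · next h =>
          rcases eq_or_ne i t with rfl | hne'
          · simp [hg]
          · rw [hg]
            simp only [if_neg hne']
            exact hub i (lt_of_le_of_ne (not_lt.mp h) (Ne.symm hne'))
      have hmem : (⟨t, g⟩ : Σ _ : Fin (m + 1), Fin (m + 1) → ℕ) ∈ S := by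
        rw [hS, Finset.mem_sigma]
        exact ⟨Finset.mem_Icc.mpr ⟨hℓt', Fin.le_last t⟩, hgB⟩
      refine ⟨⟨⟨t, g⟩, hmem⟩, ?_⟩
      rw [hf]
      apply Subtype.ext
      show F ⟨t, g⟩ = μ
      have hgsum' : ∑ j, g j = e - μ t := by
        rw [hg]
        rw [← Finset.add_sum_erase _ _ (Finset.mem_univ t), if_pos rfl, zero_add]
        have : ∑ i ∈ Finset.univ.erase t, (if i = t then 0 else μ i) =
            ∑ i ∈ Finset.univ.erase t, μ i := by
          refine Finset.sum_congr rfl fun i hi => by rw [if_neg (Finset.mem_erase.mp hi).1]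
        rw [this]
        have h4 : μ t + ∑ i ∈ Finset.univ.erase t, μ i = e := by
          rw [← hμsum]; exact Finset.add_sum_erase _ _ (Finset.mem_univ t)
        omega
      have hμt_le : μ t ≤ e := by
        rw [← hμsum]
        exact Finset.single_le_sum (f := fun i => μ i) (fun _ _ => Nat.zero_le _) (Finset.mem_univ t)
      ext i
      rw [hFapp]
      rcases eq_or_ne i t with rfl | hne'
      · rw [if_pos rfl, hgsum']
        omega
      · rw [if_neg hne', hg]
        simp [hne']
  -- count
  rw [Nat.card_congr (Equiv.ofBijective f hbij).symm, Nat.card_eq_finsetCard, hS,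
    Finset.card_sigma]
  have hfil : ∀ t : Fin (m + 1), Finset.univ.filter (· < t) = Finset.Iio t := by
    intro t; ext i; simp
  have hBcard : ∀ t : Fin (m + 1), (B t).card = ∏ i ∈ Finset.Iio t, (q - ν i) := by
    intro t
    rw [hB, Fintype.card_piFinset, ← hfil, Finset.prod_filter]
    refine Finset.prod_congr rfl fun i _ => ?_
    split
    · rw [Nat.card_Icc]; omega
    · rw [Finset.card_singleton]
  have hℓlast : ℓ ≤ Fin.last m := Fin.le_last ℓ
  rw [Finset.Icc_eq_cons_Ioc hℓlast, Finset.sum_cons]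
  simp only [hBcard, hfil]
  have hsum2 : ∑ t ∈ Finset.Ioc ℓ (Fin.last m), ∏ i ∈ Finset.Iio t, (q - ν i)
      = (∏ i ∈ Finset.Iio ℓ, (q - ν i)) * ((q - ν ℓ) * ∑ i ∈ Finset.range (m - (ℓ : ℕ)), q ^ i) := by
    have hterm : ∀ t ∈ Finset.Ioc ℓ (Fin.last m), ∏ i ∈ Finset.Iio t, (q - ν i)
        = (∏ i ∈ Finset.Iio ℓ, (q - ν i)) * ((q - ν ℓ) * q ^ ((t : ℕ) - (ℓ : ℕ) - 1)) := by
      intro t ht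
      have hℓt2 : ℓ < t := (Finset.mem_Ioc.mp ht).1
      have hsplit : Finset.Iio t = Finset.Iio ℓ ∪ Finset.Ico ℓ t := by
        ext i
        simp only [Finset.mem_Iio, Finset.mem_union, Finset.mem_Ico]
        constructor
        · intro hi
          rcases lt_or_ge i ℓ with h | h
          · exact Or.inl h
          · exact Or.inr ⟨h, hi⟩
        · rintro (h | ⟨_, h⟩)
          · exact lt_trans h hℓt2
          · exact h
      have hdisj : Disjoint (Finset.Iio ℓ) (Finset.Ico ℓ t) := by
        rw [Finset.disjoint_left]
        intro a ha hb
        exact absurd (Finset.mem_Ico.mp hb).1 (not_le.mpr (Finset.mem_Iio.mp ha))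
      rw [hsplit, Finset.prod_union hdisj, Finset.Ico_eq_cons_Ioo hℓt2, Finset.prod_cons]
      have hIoo : ∏ i ∈ Finset.Ioo ℓ t, (q - ν i) = q ^ ((t : ℕ) - (ℓ : ℕ) - 1) := by
        rw [Finset.prod_congr rfl (fun i hi => by
          rw [hν0 i (Finset.mem_Ioo.mp hi).1]), Finset.prod_const, Nat.sub_zero, Fin.card_Ioo]
      rw [hIoo]
    rw [Finset.sum_congr rfl hterm, ← Finset.mul_sum, ← Finset.mul_sum]
    congr 1
    congr 1
    have hℓm : (ℓ : ℕ) < m + 1 := ℓ.isLt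
    refine Finset.sum_bij' (i := fun t _ => (t : ℕ) - (ℓ : ℕ) - 1)
      (j := fun j hj => (⟨(ℓ : ℕ) + 1 + j, by
        have := Finset.mem_range.mp hj; omega⟩ : Fin (m + 1))) ?_ ?_ ?_ ?_ ?_
    · intro a ha
      have h0 := Finset.mem_Ioc.mp ha
      have h1 : (ℓ : ℕ) < (a : ℕ) := h0.1
      have h2 : (a : ℕ) ≤ m := by simpa [Fin.le_def] using h0.2
      exact Finset.mem_range.mpr (by omega)
    · intro b hb
      have := Finset.mem_range.mp hb
      rw [Finset.mem_Ioc]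
      constructor
      · rw [Fin.lt_def]; simp; omega
      · rw [Fin.le_def]; simp [Fin.last]; omega
    · intro a ha
      have := Finset.mem_Ioc.mp ha
      have h1 : (ℓ : ℕ) < (a : ℕ) := this.1
      apply Fin.ext
      simp
      omega
    · intro b hb
      have := Finset.mem_range.mp hb
      simp
      omega
    · intro a ha
      have := Finset.mem_Ioc.mp ha
      have h1 : (ℓ : ℕ) < (a : ℕ) := this.1
      congr 1
  rw [hsum2]
  ring
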